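/- Let X be an m×n random binary matrix with i.i.d. Bernoulli(q) entries, and suppose each cell's selector fails independently with probability p_f. For a fixed cell (i,j) with x_{i,j}=0, the probability that there exist indices k≠i, ℓ≠j with x_{i,ℓ}=x_{k,ℓ}=x_{k,j}=1 and the selector at (k,ℓ) failed equals 1 − Σ_{u=0}^{m−1} Σ_{v=0}^{n−1} C(m−1,u) C(n−1,v) q^{u+v} (1−q)^{(m−1−u)+(n−1−v)} (1−p_f q)^{uv}. -/

import Mathlib

open Finset
open scoped Classical

private lemma sum_fun_prod {ι : Type*} [Fintype ι] [DecidableEq ι] {κ : ι → Type*}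
    [∀ i, Fintype (κ i)] (f : ∀ i, κ i → ℝ) :
    ∑ g : ∀ i, κ i, ∏ i, f i (g i) = ∏ i, ∑ t, f i t := (Fintype.prod_sum f).symm

private lemma sum_condition {ι κ : Type*} [Fintype ι] [DecidableEq ι] [Fintype κ]
    [DecidableEq κ]
    (i0 : ι) (H : (ι → κ) → ℝ) :
    ∑ g : ι → κ, H g = ∑ t : κ, ∑ g : ι → κ, if g i0 = t then H g else 0 := by
  rw [Finset.sum_comm]
  exact Finset.sum_congr rfl fun g _ => by simp

private lemma sum_boolfun {ι : Type*} [Fintype ι] [DecidableEq ι] (F : (ι → Bool) → ℝ) :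
    ∑ r : ι → Bool, F r = ∑ t : Finset ι, F (fun l => (l ∈ t : Bool)) := by
  have hbij : Function.Bijective (fun t : Finset ι => (fun l => (l ∈ t : Bool))) := by
    constructor
    · intro s t h
      ext a
      have := congrFun h a
      simpa using this
    · intro r
      refine ⟨univ.filter (fun l => r l = true), funext fun a => ?_⟩
      simp
  exact (Fintype.sum_bijective _ hbij _ _ (fun t => rfl)).symm

private lemma prod_pairs_erase {m n : ℕ} (i : Fin m) (j : Fin n) (F : Fin m × Fin n → ℝ) :
    ∏ p ∈ (univ : Finset (Fin m × Fin n)).erase (i, j), F p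
      = (∏ l ∈ univ.erase j, F (i, l)) * ∏ k ∈ univ.erase i, ∏ l, F (k, l) := by
  have hset : (univ : Finset (Fin m × Fin n)).erase (i, j)
      = ({i} ×ˢ (univ.erase j)) ∪ ((univ.erase i) ×ˢ univ) := by
    ext p
    simp only [Finset.mem_erase, Finset.mem_union, Finset.mem_product, Finset.mem_singleton,
      Finset.mem_univ, and_true, true_and, Ne, Prod.ext_iff, not_and]
    tauto
  have hdisj : Disjoint ({i} ×ˢ ((univ : Finset (Fin n)).erase j))
      (((univ : Finset (Fin m)).erase i) ×ˢ univ) := by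
    rw [Finset.disjoint_left]
    rintro p hp hq
    simp only [Finset.mem_product, Finset.mem_singleton, Finset.mem_erase] at hp hq
    exact hq.1.1 hp.1
  rw [hset, Finset.prod_union hdisj, Finset.prod_product, Finset.prod_product,
    Finset.prod_singleton]

private lemma sum_matrix_prod {m n : ℕ} (G : Fin m → Fin n → Bool → ℝ) :
    ∑ X : Fin m → Fin n → Bool, ∏ k, ∏ l, G k l (X k l)
      = ∏ k, ∏ l, (G k l true + G k l false) :=
  calc ∑ X : Fin m → Fin n → Bool, ∏ k, ∏ l, G k l (X k l)
      = ∏ k, ∑ row : Fin n → Bool, ∏ l, G k l (row l) :=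
        sum_fun_prod (fun k (row : Fin n → Bool) => ∏ l, G k l (row l))
    _ = ∏ k, ∏ l, ∑ t, G k l t :=
        Finset.prod_congr rfl fun k _ => sum_fun_prod (fun l (t : Bool) => G k l t)
    _ = ∏ k, ∏ l, (G k l true + G k l false) := by simp

private lemma sum_fun_pin {ι : Type*} [Fintype ι] [DecidableEq ι] {κ : Type*} [Fintype κ]
    [DecidableEq κ] (i0 : ι) (r : κ) (A : ℝ) (B : ι → κ → ℝ) :
    ∑ g : ι → κ, (if g i0 = r then A else 0) * ∏ k ∈ univ.erase i0, B k (g k)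
      = A * ∏ k ∈ univ.erase i0, ∑ t, B k t := by
  have h1 : ∀ g : ι → κ, (if g i0 = r then A else 0) * ∏ k ∈ univ.erase i0, B k (g k)
      = ∏ k, (fun t => if k = i0 then (if t = r then A else 0) else B k t) (g k) := by
    intro g
    rw [← Finset.mul_prod_erase univ _ (Finset.mem_univ i0)]
    simp only [if_pos rfl]
    exact congrArg _ (Finset.prod_congr rfl fun k hk => by
      rw [if_neg (Finset.mem_erase.1 hk).1]).symm
  calc ∑ g : ι → κ, (if g i0 = r then A else 0) * ∏ k ∈ univ.erase i0, B k (g k)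
      = ∑ g : ι → κ, ∏ k, (fun k t => if k = i0 then (if t = r then A else 0) else B k t) k (g k) :=
        Finset.sum_congr rfl fun g _ => h1 g
    _ = ∏ k, ∑ t, (fun k t => if k = i0 then (if t = r then A else 0) else B k t) k t :=
        sum_fun_prod (fun k (t : κ) => if k = i0 then (if t = r then A else 0) else B k t)
    _ = A * ∏ k ∈ univ.erase i0, ∑ t, B k t := by
        rw [← Finset.mul_prod_erase univ _ (Finset.mem_univ i0)]
        simp only [if_pos rfl]
        congr 1
        · simp
        · exact Finset.prod_congr rfl fun k hk => Finset.sum_congr rfl fun t _ => by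
            simp only [if_neg (Finset.mem_erase.1 hk).1]

private lemma prod_ite_pow {ι : Type*} (s : Finset ι) (P : ι → Prop) [DecidablePred P] (a : ℝ) :
    ∏ l ∈ s, (if P l then a else 1) = a ^ (s.filter P).card := by
  rw [← Finset.prod_filter_mul_prod_filter_not s P]
  rw [Finset.prod_congr rfl (fun l hl => if_pos (Finset.mem_filter.1 hl).2),
    Finset.prod_congr rfl (fun l hl => if_neg (Finset.mem_filter.1 hl).2)]
  simp

private lemma prod_ite_mem_card {ι : Type*} [DecidableEq ι] (s t : Finset ι) (hts : t ⊆ s)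
    (a b : ℝ) : ∏ l ∈ s, (if l ∈ t then a else b) = a ^ t.card * b ^ (s.card - t.card) := by
  rw [← Finset.prod_filter_mul_prod_filter_not s (fun l => l ∈ t)]
  rw [Finset.prod_congr rfl (fun l hl => if_pos (Finset.mem_filter.1 hl).2),
    Finset.prod_congr rfl (fun l hl => if_neg (Finset.mem_filter.1 hl).2)]
  rw [Finset.prod_const, Finset.prod_const]
  congr 2
  · congr 1
    rw [Finset.filter_mem_eq_inter, Finset.inter_eq_right.2 hts]
  · rw [Finset.filter_not, Finset.card_sdiff_of_subset (Finset.filter_subset _ _),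
      Finset.filter_mem_eq_inter, Finset.inter_eq_right.2 hts]

private lemma sum_boolfun_count {ι : Type*} [Fintype ι] [DecidableEq ι] (j0 : ι) (a b : ℝ)
    (φ : ℕ → ℝ) :
    ∑ r : ι → Bool, (if r j0 = false then
        (∏ l ∈ univ.erase j0, (if r l then a else b)) *
          φ ((univ.erase j0).filter (fun l => r l = true)).card
      else 0)
    = ∑ u ∈ Finset.range ((univ.erase j0 : Finset ι).card + 1),
        (((univ.erase j0 : Finset ι).card).choose u : ℝ) *
          (a ^ u * b ^ ((univ.erase j0 : Finset ι).card - u) * φ u) := by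
  rw [sum_boolfun]
  have hpt : ∀ t : Finset ι,
      (if (j0 ∈ t : Bool) = false then
        (∏ l ∈ univ.erase j0, (if (l ∈ t : Bool) then a else b)) *
          φ ((univ.erase j0).filter (fun l => (l ∈ t : Bool) = true)).card
      else 0)
      = (if t ∈ (univ.erase j0 : Finset ι).powerset then
          a ^ t.card * b ^ ((univ.erase j0 : Finset ι).card - t.card) * φ t.card else 0) := by
    intro t
    by_cases hj : j0 ∈ t
    · rw [if_neg (by simp [hj]), if_neg (by simp [Finset.mem_powerset, Finset.subset_erase, hj])]
    · have hts : t ⊆ univ.erase j0 := by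
        rw [Finset.subset_erase]
        exact ⟨Finset.subset_univ t, hj⟩
      rw [if_pos (by simp [hj]), if_pos (Finset.mem_powerset.2 hts)]
      have h1 : ∏ l ∈ univ.erase j0, (if (l ∈ t : Bool) then a else b)
          = a ^ t.card * b ^ ((univ.erase j0 : Finset ι).card - t.card) := by
        rw [Finset.prod_congr rfl (fun l _ => by
          show (if (l ∈ t : Bool) then a else b) = if l ∈ t then a else b
          by_cases h : l ∈ t <;> simp [h])]
        exact prod_ite_mem_card _ t hts a b
      have h2 : (univ.erase j0).filter (fun l => (l ∈ t : Bool) = true) = t := by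
        have hxj : ∀ x, x ∈ t → x ≠ j0 := fun x hx e => hj (e ▸ hx)
        ext x
        simp only [Finset.mem_filter, Finset.mem_erase, Finset.mem_univ, true_and, and_true,
          decide_eq_true_eq]
        exact ⟨fun h => h.2, fun h => ⟨hxj x h, h⟩⟩
      rw [h1, h2]
  rw [Finset.sum_congr rfl fun t _ => hpt t]
  rw [Finset.sum_ite_mem, Finset.univ_inter]
  rw [Finset.sum_powerset_apply_card (fun u =>
    a ^ u * b ^ ((univ.erase j0 : Finset ι).card - u) * φ u)]
  exact Finset.sum_congr rfl fun u _ => by rw [nsmul_eq_mul]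

private noncomputable def G1 {m n : ℕ} (q : ℝ) (i : Fin m) (j : Fin n)
    (k : Fin m) (l : Fin n) (t : Bool) : ℝ :=
  if k = i ∧ l = j then (if t = false then 1 else 0) else (if t then q else 1 - q)

private lemma step_sumW {m n : ℕ} (q : ℝ) (i : Fin m) (j : Fin n) :
    ∑ X : Fin m → Fin n → Bool,
      (if X i j = false then
        ∏ p ∈ Finset.univ.filter (fun p : Fin m × Fin n => p ≠ (i, j)),
          (if X p.1 p.2 then q else 1 - q) else 0) = 1 := by
  classical
  have hpt : ∀ X : Fin m → Fin n → Bool,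
      (if X i j = false then
        ∏ p ∈ Finset.univ.filter (fun p : Fin m × Fin n => p ≠ (i, j)),
          (if X p.1 p.2 then q else 1 - q) else 0)
      = ∏ k, ∏ l, G1 q i j k l (X k l) := by
    intro X
    have hG : ∏ k, ∏ l, G1 q i j k l (X k l)
        = ∏ p : Fin m × Fin n, G1 q i j p.1 p.2 (X p.1 p.2) :=
      (Fintype.prod_prod_type (fun p : Fin m × Fin n => G1 q i j p.1 p.2 (X p.1 p.2))).symm
    rw [hG, ← Finset.mul_prod_erase univ _ (Finset.mem_univ (i, j)), Finset.filter_ne']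
    have herase : ∏ p ∈ (univ : Finset (Fin m × Fin n)).erase (i, j),
          G1 q i j p.1 p.2 (X p.1 p.2)
        = ∏ p ∈ (univ : Finset (Fin m × Fin n)).erase (i, j),
            (if X p.1 p.2 then q else 1 - q) :=
      Finset.prod_congr rfl fun p hp => by
        have hne : ¬(p.1 = i ∧ p.2 = j) := fun h =>
          (Finset.mem_erase.1 hp).1 (Prod.ext_iff.2 ⟨h.1, h.2⟩)
        simp only [G1, if_neg hne]
    rw [herase]
    by_cases hA : X i j = false
    · rw [if_pos hA]
      have h0 : G1 q i j i j (X i j) = 1 := by simp [G1, hA]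
      rw [h0, one_mul]
    · rw [if_neg hA]
      have hA' : X i j = true := by simpa using hA
      have h0 : G1 q i j i j (X i j) = 0 := by simp [G1, hA']
      rw [h0, zero_mul]
  rw [Finset.sum_congr rfl fun X _ => hpt X]
  refine (sum_matrix_prod (G1 q i j)).trans ?_
  have h1 : ∀ (k : Fin m) (l : Fin n), G1 q i j k l true + G1 q i j k l false = 1 := by
    intro k l
    by_cases h : k = i ∧ l = j
    · simp [G1, h]
    · simp only [G1, if_neg h]
      norm_num
  simp [h1]

private lemma step_sumV {m n : ℕ} (pf : ℝ) :
    ∑ S : Fin m → Fin n → Bool,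
      ∏ p : Fin m × Fin n, (if S p.1 p.2 then pf else 1 - pf) = 1 := by
  have h1 : ∀ S : Fin m → Fin n → Bool,
      (∏ p : Fin m × Fin n, (if S p.1 p.2 then pf else 1 - pf))
        = ∏ k, ∏ l, (if S k l then pf else 1 - pf) :=
    fun S => Fintype.prod_prod_type _
  refine (Finset.sum_congr rfl fun S _ => h1 S).trans ?_
  refine (sum_matrix_prod (fun _ _ t => if t then pf else 1 - pf)).trans ?_
  norm_num

private noncomputable def G2 {m n : ℕ} (pf : ℝ) (i : Fin m) (j : Fin n)
    (X : Fin m → Fin n → Bool) (k : Fin m) (l : Fin n) (t : Bool) : ℝ :=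
  if (k ≠ i ∧ l ≠ j ∧ X i l = true ∧ X k l = true ∧ X k j = true) ∧ t = true then 0
  else (if t then pf else 1 - pf)

private lemma step_T {m n : ℕ} (pf : ℝ) (i : Fin m) (j : Fin n) (X : Fin m → Fin n → Bool) :
    ∑ S : Fin m → Fin n → Bool,
      (if ¬(∃ k : Fin m, ∃ l : Fin n, k ≠ i ∧ l ≠ j ∧
            X i l = true ∧ X k l = true ∧ X k j = true ∧ S k l = true) then
        ∏ p : Fin m × Fin n, (if S p.1 p.2 then pf else 1 - pf) else 0)
    = ∏ k, ∏ l, (if k ≠ i ∧ l ≠ j ∧ X i l = true ∧ X k l = true ∧ X k j = true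
        then 1 - pf else 1) := by
  classical
  have hpt : ∀ S : Fin m → Fin n → Bool,
      (if ¬(∃ k : Fin m, ∃ l : Fin n, k ≠ i ∧ l ≠ j ∧
            X i l = true ∧ X k l = true ∧ X k j = true ∧ S k l = true) then
        ∏ p : Fin m × Fin n, (if S p.1 p.2 then pf else 1 - pf) else 0)
      = ∏ k, ∏ l, G2 pf i j X k l (S k l) := by
    intro S
    by_cases hE : ∃ k : Fin m, ∃ l : Fin n, k ≠ i ∧ l ≠ j ∧
        X i l = true ∧ X k l = true ∧ X k j = true ∧ S k l = true
    · rw [if_neg (not_not_intro hE)]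
      obtain ⟨k, l, h1, h2, h3, h4, h5, h6⟩ := hE
      symm
      refine Finset.prod_eq_zero (Finset.mem_univ k) ?_
      refine Finset.prod_eq_zero (Finset.mem_univ l) ?_
      simp [G2, h1, h2, h3, h4, h5, h6]
    · rw [if_pos hE]
      refine (Fintype.prod_prod_type
        (fun p : Fin m × Fin n => if S p.1 p.2 then pf else 1 - pf)).trans ?_
      refine Finset.prod_congr rfl fun k _ => Finset.prod_congr rfl fun l _ => ?_
      have hne : ¬((k ≠ i ∧ l ≠ j ∧ X i l = true ∧ X k l = true ∧ X k j = true)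
          ∧ S k l = true) := fun h =>
        hE ⟨k, l, h.1.1, h.1.2.1, h.1.2.2.1, h.1.2.2.2.1, h.1.2.2.2.2, h.2⟩
      simp only [G2, if_neg hne]
  rw [Finset.sum_congr rfl fun S _ => hpt S]
  refine (sum_matrix_prod (G2 pf i j X)).trans ?_
  refine Finset.prod_congr rfl fun k _ => Finset.prod_congr rfl fun l _ => ?_
  by_cases hc : k ≠ i ∧ l ≠ j ∧ X i l = true ∧ X k l = true ∧ X k j = true
  · simp [G2, hc]
  · simp only [G2, hc, false_and, if_false, if_neg hc]
    norm_num

private noncomputable def Afun {n : ℕ} (q : ℝ) (j : Fin n) (r : Fin n → Bool) : ℝ :=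
  if r j = false then ∏ l ∈ univ.erase j, (if r l then q else 1 - q) else 0

private noncomputable def Bfun {n : ℕ} (q pf : ℝ) (j : Fin n) (r row : Fin n → Bool) : ℝ :=
  (∏ l, (if row l then q else 1 - q)) *
    ∏ l, (if l ≠ j ∧ r l = true ∧ row l = true ∧ row j = true then 1 - pf else 1)

private lemma step_row {m n : ℕ} (q pf : ℝ) (i : Fin m) (j : Fin n) (r : Fin n → Bool) :
    ∑ X : Fin m → Fin n → Bool,
      (if X i = r then
        (if X i j = false then
          ∏ p ∈ Finset.univ.filter (fun p : Fin m × Fin n => p ≠ (i, j)),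
            (if X p.1 p.2 then q else 1 - q) else 0) *
        ∏ k, ∏ l, (if k ≠ i ∧ l ≠ j ∧ X i l = true ∧ X k l = true ∧ X k j = true
          then 1 - pf else 1)
      else 0)
    = Afun q j r * (∑ row : Fin n → Bool, Bfun q pf j r row) ^ (m - 1) := by
  classical
  have hpt : ∀ X : Fin m → Fin n → Bool,
      (if X i = r then
        (if X i j = false then
          ∏ p ∈ Finset.univ.filter (fun p : Fin m × Fin n => p ≠ (i, j)),
            (if X p.1 p.2 then q else 1 - q) else 0) *
        ∏ k, ∏ l, (if k ≠ i ∧ l ≠ j ∧ X i l = true ∧ X k l = true ∧ X k j = true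
          then 1 - pf else 1)
      else 0)
      = (if X i = r then Afun q j r else 0) * ∏ k ∈ univ.erase i, Bfun q pf j r (X k) := by
    intro X
    by_cases hXr : X i = r
    · rw [if_pos hXr, if_pos hXr]
      subst hXr
      have hW : (∏ p ∈ Finset.univ.filter (fun p : Fin m × Fin n => p ≠ (i, j)),
            (if X p.1 p.2 then q else 1 - q))
          = (∏ l ∈ univ.erase j, (if X i l then q else 1 - q)) *
              ∏ k ∈ univ.erase i, ∏ l, (if X k l then q else 1 - q) := by
        rw [Finset.filter_ne']
        exact prod_pairs_erase i j (fun p => if X p.1 p.2 then q else 1 - q)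
      have hD : (∏ k, ∏ l, (if k ≠ i ∧ l ≠ j ∧ X i l = true ∧ X k l = true ∧ X k j = true
            then 1 - pf else 1))
          = ∏ k ∈ univ.erase i, ∏ l,
              (if l ≠ j ∧ X i l = true ∧ X k l = true ∧ X k j = true then 1 - pf else 1) := by
        rw [← Finset.mul_prod_erase univ _ (Finset.mem_univ i)]
        have hrowi : (∏ l, (if i ≠ i ∧ l ≠ j ∧ X i l = true ∧ X i l = true ∧ X i j = true
            then 1 - pf else 1)) = 1 :=
          Finset.prod_eq_one fun l _ => if_neg (fun h => h.1 rfl)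
        rw [hrowi, one_mul]
        exact Finset.prod_congr rfl fun k hk => Finset.prod_congr rfl fun l _ =>
          if_congr (and_iff_right (Finset.mem_erase.1 hk).1) rfl rfl
      rw [hW, hD]
      by_cases hAj : X i j = false
      · rw [if_pos hAj]
        simp only [Afun, if_pos hAj]
        simp only [Bfun]
        rw [Finset.prod_mul_distrib]
        ring
      · rw [if_neg hAj]
        simp only [Afun, if_neg hAj]
        rw [zero_mul, zero_mul]
    · rw [if_neg hXr, if_neg hXr, zero_mul]
  rw [Finset.sum_congr rfl fun X _ => hpt X]
  rw [sum_fun_pin i r (Afun q j r) (fun _ row => Bfun q pf j r row)]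
  congr 1
  rw [Finset.prod_const, Finset.card_erase_of_mem (Finset.mem_univ i)]
  simp

private noncomputable def G3 {n : ℕ} (q pf : ℝ) (j : Fin n) (r : Fin n → Bool) (t : Bool)
    (l : Fin n) (s : Bool) : ℝ :=
  if l = j then (if s = t then (if t then q else 1 - q) else 0)
  else (if s then q else 1 - q) * (if r l = true ∧ s = true ∧ t = true then 1 - pf else 1)

private lemma step_Brow {n : ℕ} (q pf : ℝ) (j : Fin n) (r : Fin n → Bool) :
    ∑ row : Fin n → Bool, Bfun q pf j r row
      = (1 - q) + q * (1 - pf * q) ^ ((univ.erase j).filter (fun l => r l = true)).card := by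
  classical
  refine (sum_condition j (Bfun q pf j r)).trans ?_
  have hsum : ∀ t : Bool, (∑ row : Fin n → Bool, if row j = t then Bfun q pf j r row else 0)
      = (if t then q else 1 - q) *
          ∏ l ∈ univ.erase j,
            (q * (if r l = true ∧ t = true then 1 - pf else 1) + (1 - q)) := by
    intro t
    have hpt : ∀ row : Fin n → Bool,
        (if row j = t then Bfun q pf j r row else 0) = ∏ l, G3 q pf j r t l (row l) := by
      intro row
      by_cases hj : row j = t
      · rw [if_pos hj]
        simp only [Bfun]
        rw [← Finset.prod_mul_distrib]
        refine Finset.prod_congr rfl fun l _ => ?_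
        by_cases hl : l = j
        · subst hl
          have h1 : (if l ≠ l ∧ r l = true ∧ row l = true ∧ row l = true then 1 - pf else 1)
              = 1 := if_neg (fun h => h.1 rfl)
          simp [G3, hj, h1]
        · simp only [G3, if_neg hl]
          congr 1
          refine if_congr ?_ rfl rfl
          rw [hj]
          tauto
      · rw [if_neg hj]
        symm
        refine Finset.prod_eq_zero (Finset.mem_univ j) ?_
        simp [G3, hj]
    rw [Finset.sum_congr rfl fun row _ => hpt row]
    rw [sum_fun_prod (G3 q pf j r t)]
    rw [← Finset.mul_prod_erase univ _ (Finset.mem_univ j)]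
    congr 1
    · simp only [G3, if_pos rfl]
      rcases t with _ | _ <;> simp
    · refine Finset.prod_congr rfl fun l hl => ?_
      have hlj : l ≠ j := (Finset.mem_erase.1 hl).1
      rw [Fintype.sum_bool]
      simp only [G3, if_neg hlj]
      by_cases hr : r l = true <;> rcases t <;> simp [hr]
  rw [Fintype.sum_bool, hsum true, hsum false]
  have hfalse : (∏ l ∈ univ.erase j,
      (q * (if r l = true ∧ false = true then 1 - pf else 1) + (1 - q))) = 1 := by
    refine Finset.prod_eq_one fun l _ => ?_
    rw [if_neg (fun h => by simp at h)]
    ring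
  have htrue : (∏ l ∈ univ.erase j,
      (q * (if r l = true ∧ true = true then 1 - pf else 1) + (1 - q)))
      = (1 - pf * q) ^ ((univ.erase j).filter (fun l => r l = true)).card := by
    rw [← prod_ite_pow (univ.erase j) (fun l => r l = true) (1 - pf * q)]
    refine Finset.prod_congr rfl fun l _ => ?_
    by_cases hr : r l = true
    · rw [if_pos (by tauto), if_pos hr]
      ring
    · rw [if_neg (by tauto), if_neg hr]
      ring
  rw [hfalse, htrue]
  have h5 : (if (false : Bool) = true then q else 1 - q) = 1 - q := rfl
  have h6 : (if (true : Bool) = true then q else 1 - q) = q := rfl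
  rw [h5, h6]
  ring

private lemma step_S2 {m n : ℕ} (q pf : ℝ) (i : Fin m) (j : Fin n) :
    ∑ X : Fin m → Fin n → Bool, ∑ S : Fin m → Fin n → Bool,
      (if X i j = false ∧ ¬(∃ k : Fin m, ∃ l : Fin n, k ≠ i ∧ l ≠ j ∧
            X i l = true ∧ X k l = true ∧ X k j = true ∧ S k l = true) then
        (∏ p ∈ Finset.univ.filter (fun p : Fin m × Fin n => p ≠ (i, j)),
            (if X p.1 p.2 then q else 1 - q)) *
          ∏ p : Fin m × Fin n, (if S p.1 p.2 then pf else 1 - pf)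
      else 0)
    = ∑ u ∈ Finset.range ((univ.erase j : Finset (Fin n)).card + 1),
        (((univ.erase j : Finset (Fin n)).card).choose u : ℝ) *
          (q ^ u * (1 - q) ^ ((univ.erase j : Finset (Fin n)).card - u) *
            ((1 - q) + q * (1 - pf * q) ^ u) ^ (m - 1)) := by
  classical
  have h2a : ∀ X : Fin m → Fin n → Bool,
      (∑ S : Fin m → Fin n → Bool,
        (if X i j = false ∧ ¬(∃ k : Fin m, ∃ l : Fin n, k ≠ i ∧ l ≠ j ∧
              X i l = true ∧ X k l = true ∧ X k j = true ∧ S k l = true) then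
          (∏ p ∈ Finset.univ.filter (fun p : Fin m × Fin n => p ≠ (i, j)),
              (if X p.1 p.2 then q else 1 - q)) *
            ∏ p : Fin m × Fin n, (if S p.1 p.2 then pf else 1 - pf)
        else 0))
      = (if X i j = false then
          ∏ p ∈ Finset.univ.filter (fun p : Fin m × Fin n => p ≠ (i, j)),
            (if X p.1 p.2 then q else 1 - q) else 0) *
        ∏ k, ∏ l, (if k ≠ i ∧ l ≠ j ∧ X i l = true ∧ X k l = true ∧ X k j = true
          then 1 - pf else 1) := by
    intro X
    by_cases hA : X i j = false
    · have hS : ∀ S : Fin m → Fin n → Bool,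
          (if X i j = false ∧ ¬(∃ k : Fin m, ∃ l : Fin n, k ≠ i ∧ l ≠ j ∧
                X i l = true ∧ X k l = true ∧ X k j = true ∧ S k l = true) then
            (∏ p ∈ Finset.univ.filter (fun p : Fin m × Fin n => p ≠ (i, j)),
                (if X p.1 p.2 then q else 1 - q)) *
              ∏ p : Fin m × Fin n, (if S p.1 p.2 then pf else 1 - pf)
          else 0)
          = (∏ p ∈ Finset.univ.filter (fun p : Fin m × Fin n => p ≠ (i, j)),
                (if X p.1 p.2 then q else 1 - q)) *
              (if ¬(∃ k : Fin m, ∃ l : Fin n, k ≠ i ∧ l ≠ j ∧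
                  X i l = true ∧ X k l = true ∧ X k j = true ∧ S k l = true) then
                ∏ p : Fin m × Fin n, (if S p.1 p.2 then pf else 1 - pf) else 0) := by
        intro S
        by_cases hE : ¬(∃ k : Fin m, ∃ l : Fin n, k ≠ i ∧ l ≠ j ∧
            X i l = true ∧ X k l = true ∧ X k j = true ∧ S k l = true)
        · rw [if_pos ⟨hA, hE⟩, if_pos hE]
        · rw [if_neg (fun h => hE h.2), if_neg hE, mul_zero]
      rw [Finset.sum_congr rfl fun S _ => hS S, ← Finset.mul_sum, step_T pf i j X, if_pos hA]
    · rw [if_neg hA, zero_mul]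
      exact Finset.sum_eq_zero fun S _ => if_neg (fun h => hA h.1)
  rw [Finset.sum_congr rfl fun X _ => h2a X]
  refine (sum_condition i (fun X : Fin m → Fin n → Bool =>
      (if X i j = false then
        ∏ p ∈ Finset.univ.filter (fun p : Fin m × Fin n => p ≠ (i, j)),
          (if X p.1 p.2 then q else 1 - q) else 0) *
      ∏ k, ∏ l, (if k ≠ i ∧ l ≠ j ∧ X i l = true ∧ X k l = true ∧ X k j = true
        then 1 - pf else 1))).trans ?_
  refine (Finset.sum_congr rfl fun r _ => step_row q pf i j r).trans ?_
  refine (Finset.sum_congr rfl fun r _ => by rw [step_Brow q pf j r]).trans ?_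
  refine (Finset.sum_congr rfl fun r _ => ?_).trans
    (sum_boolfun_count j q (1 - q) (fun u => ((1 - q) + q * (1 - pf * q) ^ u) ^ (m - 1)))
  simp only [Afun, ite_mul, zero_mul]

/-- conditional probability (given `x i j = 0`) that some sneak path
affects cell `(i,j)`, in an `m×n` array with i.i.d. Bernoulli(q) data entries and
i.i.d. selector failures with probability `pf`. -/
theorem sneak_path_probability (m n : ℕ) (hm : 1 ≤ m) (hn : 1 ≤ n)
    (q pf : ℝ) (hq0 : 0 ≤ q) (hq1 : q ≤ 1) (hp0 : 0 ≤ pf) (hp1 : pf ≤ 1)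
    (i : Fin m) (j : Fin n) :
    (∑ X : Fin m → Fin n → Bool, ∑ S : Fin m → Fin n → Bool,
      (if X i j = false ∧ (∃ k : Fin m, ∃ l : Fin n, k ≠ i ∧ l ≠ j ∧
            X i l = true ∧ X k l = true ∧ X k j = true ∧ S k l = true) then
        (∏ p ∈ Finset.univ.filter (fun p : Fin m × Fin n => p ≠ (i, j)),
            (if X p.1 p.2 then q else 1 - q)) *
          ∏ p : Fin m × Fin n, (if S p.1 p.2 then pf else 1 - pf)
      else 0))
    = 1 - ∑ u ∈ Finset.range m, ∑ v ∈ Finset.range n,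
        ((m - 1).choose u : ℝ) * ((n - 1).choose v : ℝ) * q ^ (u + v) *
          (1 - q) ^ ((m - 1 - u) + (n - 1 - v)) * (1 - pf * q) ^ (u * v) := by
  classical
  have hsplit : ∀ (X S : Fin m → Fin n → Bool),
      (if X i j = false ∧ (∃ k : Fin m, ∃ l : Fin n, k ≠ i ∧ l ≠ j ∧
            X i l = true ∧ X k l = true ∧ X k j = true ∧ S k l = true) then
        (∏ p ∈ Finset.univ.filter (fun p : Fin m × Fin n => p ≠ (i, j)),
            (if X p.1 p.2 then q else 1 - q)) *
          ∏ p : Fin m × Fin n, (if S p.1 p.2 then pf else 1 - pf)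
      else 0)
      = (if X i j = false then
          (∏ p ∈ Finset.univ.filter (fun p : Fin m × Fin n => p ≠ (i, j)),
              (if X p.1 p.2 then q else 1 - q)) *
            ∏ p : Fin m × Fin n, (if S p.1 p.2 then pf else 1 - pf)
        else 0)
        - (if X i j = false ∧ ¬(∃ k : Fin m, ∃ l : Fin n, k ≠ i ∧ l ≠ j ∧
              X i l = true ∧ X k l = true ∧ X k j = true ∧ S k l = true) then
            (∏ p ∈ Finset.univ.filter (fun p : Fin m × Fin n => p ≠ (i, j)),
                (if X p.1 p.2 then q else 1 - q)) *
              ∏ p : Fin m × Fin n, (if S p.1 p.2 then pf else 1 - pf)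
          else 0) := by
    intro X S
    by_cases hA : X i j = false
    · by_cases hE : (∃ k : Fin m, ∃ l : Fin n, k ≠ i ∧ l ≠ j ∧
          X i l = true ∧ X k l = true ∧ X k j = true ∧ S k l = true)
      · rw [if_pos ⟨hA, hE⟩, if_pos hA, if_neg (fun h => h.2 hE)]
        ring
      · rw [if_neg (fun h => hE h.2), if_pos hA, if_pos ⟨hA, hE⟩]
        ring
    · rw [if_neg (fun h => hA h.1), if_neg hA, if_neg (fun h => hA h.1)]
      ring
  rw [Finset.sum_congr rfl fun X (_ : X ∈ univ) => Finset.sum_congr rfl fun S (_ : S ∈ univ) =>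
    hsplit X S]
  rw [Finset.sum_congr rfl fun X (_ : X ∈ univ) =>
    (Finset.sum_sub_distrib (s := (univ : Finset (Fin m → Fin n → Bool))) _ _)]
  rw [Finset.sum_sub_distrib]
  have hfirst : (∑ X : Fin m → Fin n → Bool, ∑ S : Fin m → Fin n → Bool,
      (if X i j = false then
        (∏ p ∈ Finset.univ.filter (fun p : Fin m × Fin n => p ≠ (i, j)),
            (if X p.1 p.2 then q else 1 - q)) *
          ∏ p : Fin m × Fin n, (if S p.1 p.2 then pf else 1 - pf)
      else 0)) = 1 := by
    have h : ∀ X : Fin m → Fin n → Bool,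
        (∑ S : Fin m → Fin n → Bool,
          (if X i j = false then
            (∏ p ∈ Finset.univ.filter (fun p : Fin m × Fin n => p ≠ (i, j)),
                (if X p.1 p.2 then q else 1 - q)) *
              ∏ p : Fin m × Fin n, (if S p.1 p.2 then pf else 1 - pf)
          else 0))
        = (if X i j = false then
            ∏ p ∈ Finset.univ.filter (fun p : Fin m × Fin n => p ≠ (i, j)),
              (if X p.1 p.2 then q else 1 - q) else 0) *
          ∑ S : Fin m → Fin n → Bool,
            ∏ p : Fin m × Fin n, (if S p.1 p.2 then pf else 1 - pf) := by
      intro X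
      by_cases hA : X i j = false
      · rw [if_pos hA, Finset.sum_congr rfl fun S (_ : S ∈ univ) => if_pos hA]
        exact (Finset.mul_sum _ _ _).symm
      · rw [if_neg hA, zero_mul]
        exact Finset.sum_eq_zero fun S _ => if_neg hA
    rw [Finset.sum_congr rfl fun X (_ : X ∈ univ) => h X, ← Finset.sum_mul, step_sumV pf,
      mul_one, step_sumW q i j]
  rw [hfirst, step_S2 q pf i j]
  have hcard : ((univ.erase j : Finset (Fin n)).card) = n - 1 := by
    rw [Finset.card_erase_of_mem (Finset.mem_univ j), Finset.card_univ, Fintype.card_fin]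
  rw [hcard, Nat.sub_add_cancel hn]
  congr 1
  rw [Finset.sum_comm]
  refine Finset.sum_congr rfl fun u hu => ?_
  have hb : (1 - q) + q * (1 - pf * q) ^ u = q * (1 - pf * q) ^ u + (1 - q) := add_comm _ _
  rw [hb, add_pow, Nat.sub_add_cancel hm, Finset.mul_sum, Finset.mul_sum]
  refine Finset.sum_congr rfl fun v hv => ?_
  rw [pow_add, pow_add, mul_pow, ← pow_mul, Nat.mul_comm u v]
  ring
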